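/- Let G be a connected cograph and S a minimal vertex separator of G. Then for every edge {u,v} in G \ S and every vertex w ∈ S, at least one of {u,w}, {v,w} is an edge of G (in fact both are). -/

import Mathlib

open SimpleGraph

variable {V : Type*}

/-- A graph is a cograph iff it has no induced path on four vertices. -/
def IsP4Free (G : SimpleGraph V) : Prop :=
  ∀ a b c d : V, a ≠ b → a ≠ c → a ≠ d → b ≠ c → b ≠ d → c ≠ d →
    ¬(G.Adj a b ∧ G.Adj b c ∧ G.Adj c d ∧ ¬G.Adj a c ∧ ¬G.Adj a d ∧ ¬G.Adj b d)

/-- `S` is a vertex separator of `G`: removing `S` leaves a nonempty disconnected graph. -/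
def IsVertexSeparator (G : SimpleGraph V) (S : Set V) : Prop :=
  Sᶜ.Nonempty ∧ ¬(G.induce Sᶜ).Connected

/-- `S` is a minimal vertex separator: no proper subset of `S` is a separator. -/
def IsMinimalVertexSeparator (G : SimpleGraph V) (S : Set V) : Prop :=
  IsVertexSeparator G S ∧ ∀ S' : Set V, S' ⊂ S → ¬IsVertexSeparator G S'

/-- Along a walk in `G.induce T` (where `T ⊆ Sᶜ ∪ {w}`) from a vertex reachable
from `u` in `G.induce Sᶜ` to a vertex `x` not reachable from `u`, the walk must
pass through `w`, yielding a neighbor of `w` reachable from `u` in `G.induce Sᶜ`. -/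
lemma find_nbr {G : SimpleGraph V} {S T : Set V} {w u : V}
    (hT : ∀ z ∈ T, z = w ∨ z ∉ S) (hu : u ∉ S) :
    ∀ {y xv : ↥T} (_p : (G.induce T).Walk y xv) (hxS : (xv : V) ∉ S),
      ¬ (G.induce Sᶜ).Reachable ⟨u, hu⟩ ⟨(xv : V), hxS⟩ →
      ∀ (hyS : (y : V) ∉ S), (G.induce Sᶜ).Reachable ⟨u, hu⟩ ⟨(y : V), hyS⟩ →
      ∃ a, ∃ (ha : a ∉ S), G.Adj w a ∧
        (G.induce Sᶜ).Reachable ⟨u, hu⟩ ⟨a, ha⟩ := by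
  intro y xv p
  induction p with
  | nil =>
    intro hxS hnr hyS hr
    exact absurd hr hnr
  | @cons y z _ h p ih =>
    intro hxS hnr hyS hr
    have hGyz : G.Adj (y : V) (z : V) := by
      simpa using h
    rcases hT (z : V) z.2 with hzw | hzS
    · exact ⟨(y : V), hyS, by rw [← hzw]; exact hGyz.symm, hr⟩
    · have hHyz : (G.induce Sᶜ).Adj ⟨(y : V), hyS⟩ ⟨(z : V), hzS⟩ := by
        simpa using hGyz
      exact ih hxS hnr hzS (hr.trans hHyz.reachable)

/-- If `w` is adjacent to `b` (in a different component of `G - S`) and to the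
start of a walk in `G.induce Sᶜ`, then (by P4-freeness) `w` is adjacent to every
vertex of that walk. -/
lemma adj_along {G : SimpleGraph V} (hP4 : IsP4Free G) {S : Set V} {w b : V}
    (hw : w ∈ S) (hb : b ∈ (Sᶜ : Set V)) (hwb : G.Adj w b) :
    ∀ {z y : ↥(Sᶜ : Set V)} (_p : (G.induce Sᶜ).Walk z y),
      G.Adj w (z : V) → ¬ (G.induce Sᶜ).Reachable ⟨b, hb⟩ z → G.Adj w (y : V) := by
  intro z y p
  induction p with
  | nil => exact fun h _ => h
  | @cons z z' _ h p ih =>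
    intro hwz hbz
    have hzz' : G.Adj (z : V) (z' : V) := by simpa using h
    have hbz' : ¬ (G.induce Sᶜ).Reachable ⟨b, hb⟩ z' :=
      fun r => hbz (r.trans h.reachable.symm)
    have hnbz : ¬ G.Adj b (z : V) := by
      intro hbzadj
      exact hbz ((show (G.induce Sᶜ).Adj ⟨b, hb⟩ z by simpa using hbzadj).reachable)
    have hnbz' : ¬ G.Adj b (z' : V) := by
      intro hbzadj
      exact hbz' ((show (G.induce Sᶜ).Adj ⟨b, hb⟩ z' by simpa using hbzadj).reachable)
    have hbne : b ≠ (z : V) := by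
      intro e
      exact hbz (by rw [show (⟨b, hb⟩ : ↥(Sᶜ : Set V)) = z from Subtype.ext e])
    have hbne' : b ≠ (z' : V) := by
      intro e
      exact hbz' (by rw [show (⟨b, hb⟩ : ↥(Sᶜ : Set V)) = z' from Subtype.ext e])
    have hwz' : G.Adj w (z' : V) := by
      by_contra hn
      exact hP4 b w (z : V) (z' : V) hwb.symm.ne hbne hbne'
        (fun e => z.2 (e ▸ hw)) (fun e => z'.2 (e ▸ hw)) hzz'.ne
        ⟨hwb.symm, hwz, hzz', hnbz, hnbz', hn⟩
    exact ih hwz' hbz'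

/-- Every edge `{u,v}` of `G \ S` is universal to a minimal vertex separator `S`:
each `w ∈ S` is adjacent to `u` or to `v` (in fact to both). -/
theorem stmt_3 (G : SimpleGraph V) (hconn : G.Connected) (hP4 : IsP4Free G)
    (S : Set V) (hS : IsMinimalVertexSeparator G S)
    (u v : V) (hu : u ∉ S) (hv : v ∉ S) (huv : G.Adj u v) :
    ∀ w ∈ S, (G.Adj u w ∨ G.Adj v w) ∧ (G.Adj u w ∧ G.Adj v w) := by
  intro w hw
  classical
  set H := G.induce Sᶜ with hH
  -- find a vertex x not reachable from u in H
  have hnc : ¬ H.Connected := hS.1.2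
  have hne : Nonempty ↥(Sᶜ : Set V) := ⟨⟨u, hu⟩⟩
  have hnp : ¬ H.Preconnected := by
    intro hp
    exact hnc ⟨hp⟩
  have hex : ∃ x : ↥(Sᶜ : Set V), ¬ H.Reachable ⟨u, hu⟩ x := by
    by_contra hco
    push_neg at hco
    exact hnp fun p q => (hco p).symm.trans (hco q)
  obtain ⟨x, hx⟩ := hex
  -- the graph induced on (S \ {w})ᶜ is connected
  set T : Set V := (S \ {w})ᶜ with hTdef
  have hT : ∀ z ∈ T, z = w ∨ z ∉ S := by
    intro z hz
    simp only [hTdef, Set.mem_compl_iff, Set.mem_diff, Set.mem_singleton_iff, not_and,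
      not_not] at hz
    by_cases hzS : z ∈ S
    · exact Or.inl (hz hzS)
    · exact Or.inr hzS
  have hSsubT : ∀ z, z ∉ S → z ∈ T := by
    intro z hz
    simp only [hTdef, Set.mem_compl_iff, Set.mem_diff, Set.mem_singleton_iff, not_and,
      not_not]
    exact fun h => absurd h hz
  have hTconn : (G.induce T).Connected := by
    have hsub : S \ {w} ⊂ S := by
      constructor
      · exact Set.diff_subset
      · intro hcon
        exact (hcon hw).2 rfl
    have := hS.2 (S \ {w}) hsub
    simp only [IsVertexSeparator, not_and, not_not] at this
    exact this ⟨u, hSsubT u hu⟩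
  have huT : u ∈ T := hSsubT u hu
  have hxT : (x : V) ∈ T := hSsubT _ x.2
  -- find a neighbor a of w reachable from u in H
  obtain ⟨p⟩ := hTconn ⟨u, huT⟩ ⟨(x : V), hxT⟩
  obtain ⟨a, ha, hwa, hra⟩ :=
    find_nbr (G := G) hT hu p x.2 hx hu (Reachable.refl _)
  -- find a neighbor b of w reachable from x in H
  obtain ⟨q⟩ := hTconn ⟨(x : V), hxT⟩ ⟨u, huT⟩
  obtain ⟨b, hb, hwb, hrb⟩ :=
    find_nbr (G := G) hT (u := (x : V)) x.2 q hu
      (fun r => hx r.symm) x.2 (Reachable.refl _)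
  -- b is not H-reachable from a
  have hnab : ¬ H.Reachable ⟨b, hb⟩ ⟨a, ha⟩ := by
    intro r
    exact hx (hra.trans (r.symm.trans hrb.symm))
  -- w is adjacent to everything reachable from a in H
  have hadj : ∀ y : ↥(Sᶜ : Set V), H.Reachable ⟨a, ha⟩ y → G.Adj w (y : V) := by
    intro y hr
    obtain ⟨p⟩ := hr
    exact adj_along hP4 hw hb hwb p hwa hnab
  have hrav : H.Reachable ⟨a, ha⟩ ⟨v, hv⟩ := by
    refine (hra.symm.trans ?_)
    exact (show H.Adj ⟨u, hu⟩ ⟨v, hv⟩ by simpa [hH] using huv).reachable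
  have hwu : G.Adj w u := hadj ⟨u, hu⟩ hra.symm
  have hwv : G.Adj w v := hadj ⟨v, hv⟩ hrav
  exact ⟨Or.inl hwu.symm, hwu.symm, hwv.symm⟩
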